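/- Let β > 0 and J > 0. Suppose s₁, s₂ ∈ (0,1) satisfy s₂ < s₁, J·s₁ = ((1+J)/β)·log((1+s₁)/(1−s₁)) − s₁ and −J·s₂ = ((1+J)/β)·log((1+s₂)/(1−s₂)) − s₂. Set x₁ = (1+s₁)/2 and x₂ = (1+s₂)/2. Then F_{β,J}(x₁, x₁) < F_{β,J}(x₂, 1−x₂). -/

import Mathlib

open Real Set

/-- The two-spin (q = 2) two-component Curie–Weiss free energy. -/
noncomputable def F2 (β J x y : ℝ) : ℝ :=
  -(1 / 2) * (x ^ 2 + (1 - x) ^ 2 + y ^ 2 + (1 - y) ^ 2)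
    - J * (x * y + (1 - x) * (1 - y))
    + ((1 + J) / β) * (x * Real.log x + (1 - x) * Real.log (1 - x)
        + y * Real.log y + (1 - y) * Real.log (1 - y))

noncomputable def psiAux (β J : ℝ) : ℝ → ℝ := fun t =>
  ((1 + J) / β) * ((1 + t) * Real.log ((1 + t) / 2) + (1 - t) * Real.log ((1 - t) / 2))
    - (1 + J) * t ^ 2 / 2

noncomputable def gAux (β J : ℝ) : ℝ → ℝ := fun t =>
  ((1 + J) / β) * (Real.log ((1 + t) / 2) - Real.log ((1 - t) / 2)) - (1 + J) * t

lemma hasDerivAt_psiAux (β J : ℝ) {t : ℝ} (h1 : -1 < t) (h2 : t < 1) :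
    HasDerivAt (psiAux β J) (gAux β J t) t := by
  have hp : (0:ℝ) < (1 + t) / 2 := by linarith
  have hq : (0:ℝ) < (1 - t) / 2 := by linarith
  have dA : HasDerivAt (fun t : ℝ => (1 + t) / 2) (1 / 2) t := by
    simpa using ((hasDerivAt_id t).const_add 1).div_const 2
  have dB : HasDerivAt (fun t : ℝ => (1 - t) / 2) (-1 / 2) t := by
    simpa using ((hasDerivAt_id t).const_sub 1).div_const 2
  have dLA := dA.log hp.ne'
  have dLB := dB.log hq.ne'
  have d1 := ((hasDerivAt_id t).const_add 1).mul dLA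
  have d2 := ((hasDerivAt_id t).const_sub 1).mul dLB
  have d3 : HasDerivAt (fun t : ℝ => (1 + J) * t ^ 2 / 2) ((1 + J) * t) t := by
    have := ((hasDerivAt_pow 2 t).const_mul (1 + J)).div_const 2
    refine this.congr_deriv ?_
    ring
  have H := ((d1.add d2).const_mul ((1 + J) / β)).sub d3
  have e1 : (1 + t) ≠ 0 := by linarith
  have e2 : (1 - t) ≠ 0 := by linarith
  refine H.congr_deriv ?_
  simp only [id_eq]
  rw [show (1 + t) * (1 / 2 / ((1 + t) / 2)) = 1 by field_simp,
      show (1 - t) * (-1 / 2 / ((1 - t) / 2)) = -1 by field_simp]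
  unfold gAux
  ring

lemma hasDerivAt_gAux (β J : ℝ) {t : ℝ} (h1 : -1 < t) (h2 : t < 1) :
    HasDerivAt (gAux β J)
      (((1 + J) / β) * ((1/2) / ((1 + t) / 2) + (1/2) / ((1 - t) / 2)) - (1 + J)) t := by
  have hp : (0:ℝ) < (1 + t) / 2 := by linarith
  have hq : (0:ℝ) < (1 - t) / 2 := by linarith
  have dA : HasDerivAt (fun t : ℝ => (1 + t) / 2) (1 / 2) t := by
    simpa using ((hasDerivAt_id t).const_add 1).div_const 2
  have dB : HasDerivAt (fun t : ℝ => (1 - t) / 2) (-1 / 2) t := by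
    simpa using ((hasDerivAt_id t).const_sub 1).div_const 2
  have dLA := dA.log hp.ne'
  have dLB := dB.log hq.ne'
  have d3 : HasDerivAt (fun t : ℝ => (1 + J) * t) (1 + J) t := by
    simpa using (hasDerivAt_id t).const_mul (1 + J)
  have H := ((dLA.sub dLB).const_mul ((1 + J) / β)).sub d3
  have e1 : (1 + t) ≠ 0 := by linarith
  have e2 : (1 - t) ≠ 0 := by linarith
  refine H.congr_deriv ?_
  rw [show (1:ℝ) / 2 / ((1 + t) / 2) - -1 / 2 / ((1 - t) / 2)
        = 1 / 2 / ((1 + t) / 2) + 1 / 2 / ((1 - t) / 2) by ring]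

lemma gAux_neg (β J : ℝ) (hβ : 0 < β) (hJ : 0 < J)
    (s₁ s₂ : ℝ) (hs₁ : s₁ ∈ Ioo (0 : ℝ) 1) (hs₂ : s₂ ∈ Ioo (0 : ℝ) 1)
    (hlt : s₂ < s₁)
    (hg₁ : gAux β J s₁ = 0) (hg₂ : gAux β J s₂ = -(2 * J * s₂)) :
    ∀ t ∈ Ioo s₂ s₁, gAux β J t < 0 := by
  -- g is convex on [s₂, s₁] since its derivative is monotone
  have hconv : ConvexOn ℝ (Icc s₂ s₁) (gAux β J) := by
    apply MonotoneOn.convexOn_of_deriv (convex_Icc _ _)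
    · intro t ht
      exact (hasDerivAt_gAux β J (by linarith [hs₂.1, ht.1]) (by linarith [hs₁.2, ht.2])).continuousAt.continuousWithinAt
    · rw [interior_Icc]
      intro t ht
      exact (hasDerivAt_gAux β J (by linarith [hs₂.1, ht.1]) (by linarith [hs₁.2, ht.2])).differentiableAt.differentiableWithinAt
    · rw [interior_Icc]
      intro a ha b hb hab
      have ha0 : 0 < a := lt_trans hs₂.1 ha.1
      have ha1 : a < 1 := lt_trans ha.2 hs₁.2
      have hb0 : 0 < b := lt_trans hs₂.1 hb.1
      have hb1 : b < 1 := lt_trans hb.2 hs₁.2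
      rw [(hasDerivAt_gAux β J (by linarith) (by linarith)).deriv,
          (hasDerivAt_gAux β J (by linarith) (by linarith)).deriv]
      have key : (1:ℝ) / 2 / ((1 + a) / 2) + 1 / 2 / ((1 - a) / 2)
          ≤ 1 / 2 / ((1 + b) / 2) + 1 / 2 / ((1 - b) / 2) := by
        rw [div_add_div _ _ (by linarith : (0:ℝ) < (1 + a)/2).ne' (by linarith : (0:ℝ) < (1 - a)/2).ne',
            div_add_div _ _ (by linarith : (0:ℝ) < (1 + b)/2).ne' (by linarith : (0:ℝ) < (1 - b)/2).ne',
            div_le_div_iff₀ (mul_pos (by linarith) (by linarith)) (mul_pos (by linarith) (by linarith))]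
        nlinarith
      have hc0 : (0:ℝ) ≤ (1 + J) / β := by positivity
      nlinarith [mul_le_mul_of_nonneg_left key hc0]
  intro t ht
  have hd : 0 < s₁ - s₂ := by linarith [ht.1, ht.2]
  set a : ℝ := (s₁ - t) / (s₁ - s₂) with hadef
  set b : ℝ := (t - s₂) / (s₁ - s₂) with hbdef
  have ha : 0 < a := div_pos (by linarith [ht.2]) hd
  have hb : 0 ≤ b := le_of_lt (div_pos (by linarith [ht.1]) hd)
  have hab : a + b = 1 := by
    rw [hadef, hbdef, ← add_div, div_eq_one_iff_eq hd.ne']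
    ring
  have hcomb : a * s₂ + b * s₁ = t := by
    rw [hadef, hbdef]
    field_simp
    ring
  have h := hconv.2 (left_mem_Icc.mpr hlt.le) (right_mem_Icc.mpr hlt.le) ha.le hb hab
  simp only [smul_eq_mul] at h
  rw [hcomb, hg₁, hg₂] at h
  have : 0 < a * (2 * J * s₂) := mul_pos ha (by nlinarith [hs₂.1])
  nlinarith

lemma psiAux_lt (β J : ℝ) (hβ : 0 < β) (hJ : 0 < J)
    (s₁ s₂ : ℝ) (hs₁ : s₁ ∈ Ioo (0 : ℝ) 1) (hs₂ : s₂ ∈ Ioo (0 : ℝ) 1)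
    (hlt : s₂ < s₁)
    (hg₁ : gAux β J s₁ = 0) (hg₂ : gAux β J s₂ = -(2 * J * s₂)) :
    psiAux β J s₁ < psiAux β J s₂ := by
  have hneg := gAux_neg β J hβ hJ s₁ s₂ hs₁ hs₂ hlt hg₁ hg₂
  have hanti : StrictAntiOn (psiAux β J) (Icc s₂ s₁) := by
    apply strictAntiOn_of_deriv_neg (convex_Icc _ _)
    · intro t ht
      exact (hasDerivAt_psiAux β J (by linarith [hs₂.1, ht.1]) (by linarith [hs₁.2, ht.2])).continuousAt.continuousWithinAt
    · rw [interior_Icc]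
      intro t ht
      rw [(hasDerivAt_psiAux β J (by linarith [hs₂.1, ht.1]) (by linarith [hs₁.2, ht.2])).deriv]
      exact hneg t ht
  exact hanti (left_mem_Icc.mpr hlt.le) (right_mem_Icc.mpr hlt.le) hlt

/-- the diagonal minima of F_{β,J} lie strictly below the antidiagonal
ones: if s₂ < s₁ in (0,1) satisfy J s₁ = ((1+J)/β) log((1+s₁)/(1−s₁)) − s₁ and
−J s₂ = ((1+J)/β) log((1+s₂)/(1−s₂)) − s₂, then with x₁ = (1+s₁)/2, x₂ = (1+s₂)/2 we
have F_{β,J}(x₁,x₁) < F_{β,J}(x₂,1−x₂). -/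
theorem stmt_4 (β J : ℝ) (hβ : 0 < β) (hJ : 0 < J)
    (s₁ s₂ : ℝ) (hs₁ : s₁ ∈ Ioo (0 : ℝ) 1) (hs₂ : s₂ ∈ Ioo (0 : ℝ) 1)
    (hlt : s₂ < s₁)
    (h₁ : J * s₁ = ((1 + J) / β) * Real.log ((1 + s₁) / (1 - s₁)) - s₁)
    (h₂ : -(J * s₂) = ((1 + J) / β) * Real.log ((1 + s₂) / (1 - s₂)) - s₂) :
    F2 β J ((1 + s₁) / 2) ((1 + s₁) / 2) <
      F2 β J ((1 + s₂) / 2) (1 - (1 + s₂) / 2) := by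
  have h10 : (0:ℝ) < 1 - s₁ := by linarith [hs₁.2]
  have h1p : (0:ℝ) < 1 + s₁ := by linarith [hs₁.1]
  have h20 : (0:ℝ) < 1 - s₂ := by linarith [hs₂.2]
  have h2p : (0:ℝ) < 1 + s₂ := by linarith [hs₂.1]
  have hlog₁ : Real.log ((1 + s₁) / (1 - s₁))
      = Real.log ((1 + s₁) / 2) - Real.log ((1 - s₁) / 2) := by
    rw [show (1 + s₁) / (1 - s₁) = ((1 + s₁) / 2) / ((1 - s₁) / 2) by
          rw [div_div_div_comm]; norm_num,
        Real.log_div (by linarith : (0:ℝ) < (1 + s₁) / 2).ne'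
          (by linarith : (0:ℝ) < (1 - s₁) / 2).ne']
  have hlog₂ : Real.log ((1 + s₂) / (1 - s₂))
      = Real.log ((1 + s₂) / 2) - Real.log ((1 - s₂) / 2) := by
    rw [show (1 + s₂) / (1 - s₂) = ((1 + s₂) / 2) / ((1 - s₂) / 2) by
          rw [div_div_div_comm]; norm_num,
        Real.log_div (by linarith : (0:ℝ) < (1 + s₂) / 2).ne'
          (by linarith : (0:ℝ) < (1 - s₂) / 2).ne']
  have hg₁ : gAux β J s₁ = 0 := by
    unfold gAux
    rw [← hlog₁]
    linarith [h₁]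
  have hg₂ : gAux β J s₂ = -(2 * J * s₂) := by
    unfold gAux
    rw [← hlog₂]
    linarith [h₂]
  have hψ := psiAux_lt β J hβ hJ s₁ s₂ hs₁ hs₂ hlt hg₁ hg₂
  have hq : 0 < J * s₂ ^ 2 := mul_pos hJ (pow_pos hs₂.1 2)
  have e₁ : F2 β J ((1 + s₁) / 2) ((1 + s₁) / 2) = psiAux β J s₁ - (1 + J) / 2 := by
    unfold F2 psiAux
    rw [show (1:ℝ) - (1 + s₁) / 2 = (1 - s₁) / 2 by ring]
    ring
  have e₂ : F2 β J ((1 + s₂) / 2) (1 - (1 + s₂) / 2)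
      = psiAux β J s₂ + J * s₂ ^ 2 - (1 + J) / 2 := by
    unfold F2 psiAux
    rw [show (1:ℝ) - (1 + s₂) / 2 = (1 - s₂) / 2 by ring]
    rw [show (1:ℝ) - (1 - s₂) / 2 = (1 + s₂) / 2 by ring]
    ring
  rw [e₁, e₂]
  linarith
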